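/- Let p ∈ [1,∞), q, s ∈ [1,∞] with q > s, and A = (α₀, α_∞), B = (β₀, β_∞) ∈ ℝ² be such that (p,q,A) and (p,s,B) are admissible Lorentz–Zygmund parameters. If β_∞ < α_∞ ≤ β_∞ + 1/s − 1/q, then for every a > 0: sup{ ‖f^* χ_{(a,∞)}‖_{L^{p,s,B}(0,∞)} : f measurable on (0,∞), ‖f‖_{L^{p,q,A}(0,∞)} ≤ 1 } = ∞; in particular the supremum does not tend to 0 as a → ∞. -/

import Mathlib

open MeasureTheory Set Filter Topology
open scoped ENNReal NNReal

noncomputable section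

/-- The nonincreasing rearrangement of an `ℝ≥0∞`-valued function with respect to `μ`:
`f^*(t) = inf {λ : μ({f > λ}) ≤ t}`. -/
def rearr {α : Type*} [MeasurableSpace α] (μ : Measure α) (f : α → ℝ≥0∞) (t : ℝ) : ℝ≥0∞ :=
  sInf {l : ℝ≥0∞ | μ {x | l < f x} ≤ ENNReal.ofReal t}

/-- Lebesgue measure on `(0,∞)`. -/
def μI : Measure ℝ := volume.restrict (Set.Ioi (0 : ℝ))

/-- `ℓ(t) = 1 + |log t|`. -/
def ell (t : ℝ) : ℝ := 1 + |Real.log t|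

/-- The broken-logarithm power `ℓ^A(t)`, equal to `ℓ(t)^{α₀}` for `t ≤ 1` and to
`ℓ(t)^{α_∞}` for `t > 1`, where `A = (α₀, α_∞)`. -/
def ellA (A : ℝ × ℝ) (t : ℝ) : ℝ := if t ≤ 1 then ell t ^ A.1 else ell t ^ A.2

/-- The `L^q(0,∞)` norm (with `q ∈ [1,∞]`) of a nonnegative function. -/
def lqNorm (q : ℝ≥0∞) (g : ℝ → ℝ≥0∞) : ℝ≥0∞ :=
  if q = ∞ then essSup g μI
  else (∫⁻ t in Set.Ioi (0 : ℝ), g t ^ q.toReal) ^ q.toReal⁻¹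

/-- The Lorentz–Zygmund functional
`‖f‖_{L^{p,q,A}(0,∞)} = ‖ t^{1/p - 1/q} ℓ^A(t) f^*(t) ‖_{L^q(0,∞)}`
(with the conventions `1/∞ = 0`). -/
def lzNorm (p q : ℝ≥0∞) (A : ℝ × ℝ) (f : ℝ → ℝ≥0∞) : ℝ≥0∞ :=
  lqNorm q fun t => ENNReal.ofReal (t ^ (p.toReal⁻¹ - q.toReal⁻¹) * ellA A t) * rearr μI f t

/-- Admissibility of Lorentz–Zygmund parameters: the functional `‖·‖_{L^{p,q,A}}` is
equivalent to a rearrangement-invariant norm. -/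
def LZAdmissible (p q : ℝ≥0∞) (A : ℝ × ℝ) : Prop :=
  (p = 1 ∧ q = 1 ∧ 0 ≤ A.1 ∧ A.2 ≤ 0) ∨
  (1 < p ∧ p < ∞ ∧ 1 ≤ q) ∨
  (p = ∞ ∧ 1 ≤ q ∧ q < ∞ ∧ A.1 + q.toReal⁻¹ < 0) ∨
  (p = ∞ ∧ q = ∞ ∧ A.1 ≤ 0)

lemma rearr_anti (f : ℝ → ℝ≥0∞) : Antitone (rearr μI f) := by
  intro t t' h
  exact sInf_le_sInf fun l hl => le_trans hl (ENNReal.ofReal_le_ofReal h)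

lemma rearr_le_self {F : ℝ → ℝ≥0∞} (hF : Antitone F) {t : ℝ} (ht : 0 < t) :
    rearr μI F t ≤ F t := by
  apply sInf_le
  show μI {x | F t < F x} ≤ ENNReal.ofReal t
  have hsub : {x | F t < F x} ⊆ Iio t := by
    intro x hx
    rcases lt_or_ge x t with h | h
    · exact mem_Iio.mpr h
    · exact absurd (hF h) (not_le.mpr hx)
  calc μI {x | F t < F x} ≤ μI (Iio t) := measure_mono hsub
    _ = volume (Iio t ∩ Ioi 0) := Measure.restrict_apply measurableSet_Iio
    _ ≤ volume (Ioo 0 t) := by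
        apply measure_mono; intro x hx; exact ⟨hx.2, hx.1⟩
    _ = ENNReal.ofReal t := by rw [Real.volume_Ioo, sub_zero]

lemma le_rearr {F : ℝ → ℝ≥0∞} (hF : Antitone F) {t t' : ℝ} (ht : 0 < t) (h : t < t') :
    F t' ≤ rearr μI F t := by
  apply le_sInf
  intro l hl
  by_contra hlt
  push_neg at hlt
  have hsub : Ioc 0 t' ⊆ {x | l < F x} := fun x hx => lt_of_lt_of_le hlt (hF hx.2)
  have h1 : ENNReal.ofReal t' ≤ μI {x | l < F x} := by
    have : μI (Ioc 0 t') = ENNReal.ofReal t' := by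
      rw [μI, Measure.restrict_apply measurableSet_Ioc]
      rw [inter_eq_self_of_subset_left (Ioc_subset_Ioi_self.trans (le_refl _))]
      · rw [Real.volume_Ioc, sub_zero]
    calc ENNReal.ofReal t' = μI (Ioc 0 t') := this.symm
      _ ≤ _ := measure_mono hsub
  have := (ENNReal.ofReal_le_ofReal_iff ht.le).mp (h1.trans hl)
  linarith

lemma le_rearr_indicator {h : ℝ → ℝ≥0∞} (hh : Antitone h) {a t : ℝ} (ha : 0 < a) (ht : 0 < t) :
    h (a + t + 1) ≤ rearr μI ((Set.Ioi a).indicator h) t := by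
  apply le_sInf
  intro l hl
  by_contra hlt
  push_neg at hlt
  have hsub : Ioc a (a + t + 1) ⊆ {x | l < (Set.Ioi a).indicator h x} := by
    intro x hx
    have hx1 : x ∈ Ioi a := hx.1
    simp only [mem_setOf_eq, indicator_of_mem hx1]
    exact lt_of_lt_of_le hlt (hh hx.2)
  have h1 : ENNReal.ofReal (t + 1) ≤ μI {x | l < (Set.Ioi a).indicator h x} := by
    have : μI (Ioc a (a + t + 1)) = ENNReal.ofReal (t + 1) := by
      rw [μI, Measure.restrict_apply measurableSet_Ioc]
      have : Ioc a (a + t + 1) ∩ Ioi 0 = Ioc a (a + t + 1) :=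
        inter_eq_self_of_subset_left (fun x hx => lt_trans ha hx.1)
      rw [this, Real.volume_Ioc]
      congr 1; ring
    calc ENNReal.ofReal (t + 1) = μI (Ioc a (a + t + 1)) := this.symm
      _ ≤ _ := measure_mono hsub
  have := (ENNReal.ofReal_le_ofReal_iff ht.le).mp (h1.trans hl)
  linarith

lemma rearr_smul_le {f : ℝ → ℝ≥0∞} {c : ℝ≥0∞} (hc0 : c ≠ 0) (hct : c ≠ ∞) (t : ℝ) :
    c * rearr μI f t ≤ rearr μI (fun x => c * f x) t := by
  apply le_sInf
  intro l hl
  have hmem : c⁻¹ * l ∈ {l : ℝ≥0∞ | μI {x | l < f x} ≤ ENNReal.ofReal t} := by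
    have : {x | c⁻¹ * l < f x} = {x | l < c * f x} := by
      ext x
      rw [mem_setOf_eq, mem_setOf_eq, ← ENNReal.mul_lt_mul_iff_right hc0 hct, ← mul_assoc,
        ENNReal.mul_inv_cancel hc0 hct, one_mul]
    rw [mem_setOf_eq, this]
    exact hl
  calc c * rearr μI f t ≤ c * (c⁻¹ * l) := mul_le_mul_right (sInf_le hmem) c
    _ = l := by rw [← mul_assoc, ENNReal.mul_inv_cancel hc0 hct, one_mul]

lemma rearr_smul {f : ℝ → ℝ≥0∞} {c : ℝ≥0∞} (hc0 : c ≠ 0) (hct : c ≠ ∞) (t : ℝ) :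
    rearr μI (fun x => c * f x) t = c * rearr μI f t := by
  refine le_antisymm ?_ (rearr_smul_le hc0 hct t)
  have h2 := rearr_smul_le (f := fun x => c * f x) (c := c⁻¹)
    (ENNReal.inv_ne_zero.mpr hct) (ENNReal.inv_ne_top.mpr hc0) t
  have heq : (fun x => c⁻¹ * (c * f x)) = f := by
    funext x
    rw [← mul_assoc, ENNReal.inv_mul_cancel hc0 hct, one_mul]
  rw [heq] at h2
  calc rearr μI (fun x => c * f x) t
      = c * (c⁻¹ * rearr μI (fun x => c * f x) t) := by
        rw [← mul_assoc, ENNReal.mul_inv_cancel hc0 hct, one_mul]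
    _ ≤ c * rearr μI f t := mul_le_mul_right h2 c
lemma lqNorm_mono {q : ℝ≥0∞} {g g' : ℝ → ℝ≥0∞} (h : ∀ t, g t ≤ g' t) :
    lqNorm q g ≤ lqNorm q g' := by
  unfold lqNorm
  split
  · exact essSup_mono_ae (Filter.Eventually.of_forall h)
  · refine ENNReal.rpow_le_rpow ?_ (by positivity)
    exact lintegral_mono fun t => ENNReal.rpow_le_rpow (h t) ENNReal.toReal_nonneg

lemma lqNorm_const_mul {q : ℝ≥0∞} (hq : q ≠ 0) {c : ℝ≥0∞} (hct : c ≠ ∞) (g : ℝ → ℝ≥0∞) :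
    lqNorm q (fun t => c * g t) = c * lqNorm q g := by
  unfold lqNorm
  split
  · exact ENNReal.essSup_const_mul
  · rename_i hqt
    have hQ : 0 < q.toReal := ENNReal.toReal_pos hq hqt
    have h1 : ∀ t : ℝ, (c * g t) ^ q.toReal = c ^ q.toReal * g t ^ q.toReal := fun t =>
      ENNReal.mul_rpow_of_nonneg _ _ hQ.le
    simp only [h1]
    rw [lintegral_const_mul' _ _ (ENNReal.rpow_ne_top_of_nonneg hQ.le hct),
      ENNReal.mul_rpow_of_nonneg _ _ (inv_nonneg.mpr hQ.le), ← ENNReal.rpow_mul,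
      mul_inv_cancel₀ hQ.ne', ENNReal.rpow_one]

lemma lzNorm_const_mul (p q : ℝ≥0∞) (A : ℝ × ℝ) (hq : q ≠ 0) {c : ℝ≥0∞} (hc0 : c ≠ 0)
    (hct : c ≠ ∞) (f : ℝ → ℝ≥0∞) :
    lzNorm p q A (fun x => c * f x) = c * lzNorm p q A f := by
  unfold lzNorm
  rw [← lqNorm_const_mul hq hct]
  congr 1
  funext t
  rw [rearr_smul hc0 hct]
  ring
lemma aux_anti {ε m T x y : ℝ} (hε : 0 < ε) (hT : 1 ≤ T) (hlogT : 1 ≤ Real.log T)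
    (hm : m ≤ ε * (1 + Real.log T)) (hx : T ≤ x) (hxy : x ≤ y) :
    y ^ (-ε) * (1 + Real.log y) ^ m ≤ x ^ (-ε) * (1 + Real.log x) ^ m := by
  have hx0 : (0 : ℝ) < x := lt_of_lt_of_le (by linarith) hx
  have hy0 : (0 : ℝ) < y := lt_of_lt_of_le hx0 hxy
  have hlx : Real.log T ≤ Real.log x := Real.log_le_log (by linarith) hx
  have hlxy : Real.log x ≤ Real.log y := Real.log_le_log hx0 hxy
  have hL1x : (0 : ℝ) < 1 + Real.log x := by linarith
  have hL1y : (0 : ℝ) < 1 + Real.log y := by linarith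
  rw [Real.rpow_def_of_pos hx0, Real.rpow_def_of_pos hy0, Real.rpow_def_of_pos hL1x,
    Real.rpow_def_of_pos hL1y, ← Real.exp_add, ← Real.exp_add, Real.exp_le_exp]
  have hmon : Real.log (1 + Real.log x) ≤ Real.log (1 + Real.log y) :=
    Real.log_le_log hL1x (by linarith)
  rcases le_or_gt m 0 with hm0 | hm0
  · nlinarith
  · have key : (Real.log (1 + Real.log y) - Real.log (1 + Real.log x)) * (1 + Real.log x) ≤
        Real.log y - Real.log x := by
      have h1 : Real.log ((1 + Real.log y) / (1 + Real.log x)) ≤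
          (1 + Real.log y) / (1 + Real.log x) - 1 := Real.log_le_sub_one_of_pos (by positivity)
      rw [Real.log_div (by linarith) (by linarith)] at h1
      have h2 : ((1 + Real.log y) / (1 + Real.log x) - 1) * (1 + Real.log x)
          = Real.log y - Real.log x := by field_simp; ring
      nlinarith
    have hmL : m ≤ ε * (1 + Real.log x) := le_trans hm (by nlinarith)
    nlinarith [mul_le_mul_of_nonneg_left key hm0.le,
      mul_nonneg (sub_nonneg.mpr hmL) (sub_nonneg.mpr hlxy)]

lemma bound01 {ε : ℝ} (m : ℝ) (hε : 0 < ε) : ∃ C : ℝ, 0 < C ∧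
    ∀ t ∈ Set.Ioc (0 : ℝ) 1, t ^ ε * (1 - Real.log t) ^ m ≤ C := by
  rcases le_or_gt m 0 with hm | hm
  · refine ⟨1, one_pos, fun t ht => ?_⟩
    have hlt : Real.log t ≤ 0 := Real.log_nonpos ht.1.le ht.2
    have h1 : t ^ ε ≤ 1 := Real.rpow_le_one ht.1.le ht.2 hε.le
    have h2 : (1 - Real.log t) ^ m ≤ 1 :=
      Real.rpow_le_one_of_one_le_of_nonpos (by linarith) hm
    nlinarith [Real.rpow_nonneg ht.1.le ε,
      Real.rpow_nonneg (by linarith : (0:ℝ) ≤ 1 - Real.log t) m]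
  · set δ := ε / m with hδdef
    have hδ : 0 < δ := div_pos hε hm
    refine ⟨(1 + δ⁻¹) ^ m, by positivity, fun t ht => ?_⟩
    obtain ⟨ht0, ht1⟩ := ht
    have hkey : 1 - Real.log t ≤ (1 + δ⁻¹) * t ^ (-δ) := by
      have h1 : Real.log (t ^ (-δ)) ≤ t ^ (-δ) - 1 :=
        Real.log_le_sub_one_of_pos (Real.rpow_pos_of_pos ht0 _)
      rw [Real.log_rpow ht0] at h1
      have h2 : (1 : ℝ) ≤ t ^ (-δ) :=
        Real.one_le_rpow_of_pos_of_le_one_of_nonpos ht0 ht1 (by linarith)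
      have h3 : -Real.log t ≤ δ⁻¹ * (t ^ (-δ) - 1) := by
        calc -Real.log t = δ⁻¹ * (-δ * Real.log t) := by field_simp
          _ ≤ δ⁻¹ * (t ^ (-δ) - 1) := mul_le_mul_of_nonneg_left h1 (inv_nonneg.mpr hδ.le)
      nlinarith [inv_nonneg.mpr hδ.le]
    have hlt : Real.log t ≤ 0 := Real.log_nonpos ht0.le ht1
    have hL : (0:ℝ) ≤ 1 - Real.log t := by linarith
    calc t ^ ε * (1 - Real.log t) ^ m ≤ t ^ ε * ((1 + δ⁻¹) * t ^ (-δ)) ^ m := by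
          apply mul_le_mul_of_nonneg_left _ (Real.rpow_nonneg ht0.le ε)
          exact Real.rpow_le_rpow hL hkey hm.le
      _ = (1 + δ⁻¹) ^ m * (t ^ ε * (t ^ (-δ)) ^ m) := by
          rw [Real.mul_rpow (by positivity) (Real.rpow_nonneg ht0.le _)]; ring
      _ = (1 + δ⁻¹) ^ m := by
          rw [← Real.rpow_mul ht0.le, ← Real.rpow_add ht0]
          have hz : ε + -δ * m = 0 := by field_simp [hδdef]; rw [hδdef, div_mul_cancel₀ ε hm.ne']; ring
          rw [hz, Real.rpow_zero, mul_one]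
section calcpart

lemma pos_chain {T x : ℝ} (hT : 1 ≤ Real.log T) (hT1 : 1 ≤ T) (hx : T ≤ x) :
    0 < x ∧ 1 ≤ Real.log x ∧ 0 < 1 + Real.log x ∧ 0 ≤ Real.log (1 + Real.log x) ∧
      0 < 1 + Real.log (1 + Real.log x) := by
  have hx0 : (0:ℝ) < x := lt_of_lt_of_le (by linarith) hx
  have hlx : 1 ≤ Real.log x := le_trans hT (Real.log_le_log (by linarith) hx)
  have hL1 : (0:ℝ) < 1 + Real.log x := by linarith
  have hl2 : 0 ≤ Real.log (1 + Real.log x) := Real.log_nonneg (by linarith)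
  exact ⟨hx0, hlx, hL1, hl2, by linarith⟩

lemma hasDerivAt_L1 {x : ℝ} (hx0 : 0 < x) :
    HasDerivAt (fun t : ℝ => 1 + Real.log t) x⁻¹ x :=
  (Real.hasDerivAt_log hx0.ne').const_add 1

lemma hasDerivAt_L2 {x : ℝ} (hx0 : 0 < x) (hL1 : 0 < 1 + Real.log x) :
    HasDerivAt (fun t : ℝ => 1 + Real.log (1 + Real.log t)) ((1 + Real.log x)⁻¹ * x⁻¹) x := by
  have h := (((Real.hasDerivAt_log hL1.ne').comp x (hasDerivAt_L1 hx0)).const_add 1)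
  exact h

lemma tendsto_L2 : Tendsto (fun x : ℝ => 1 + Real.log (1 + Real.log x)) atTop atTop := by
  have t1 : Tendsto (fun x : ℝ => 1 + Real.log x) atTop atTop :=
    tendsto_atTop_add_const_left atTop 1 Real.tendsto_log_atTop
  exact tendsto_atTop_add_const_left atTop 1 (Real.tendsto_log_atTop.comp t1)

lemma lint_div {T : ℝ} (hT1 : 1 ≤ T) (hT : 1 ≤ Real.log T) :
    ∫⁻ t in Set.Ioi T,
      ENNReal.ofReal ((t * ((1 + Real.log t) * (1 + Real.log (1 + Real.log t))))⁻¹) = ∞ := by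
  set ψ : ℝ → ℝ := fun t => (t * ((1 + Real.log t) * (1 + Real.log (1 + Real.log t))))⁻¹ with hψ
  set H : ℝ → ℝ := fun t => Real.log (1 + Real.log (1 + Real.log t)) with hH
  have derivH : ∀ x, T ≤ x → HasDerivAt H (ψ x) x := by
    intro x hx
    obtain ⟨hx0, hlx, hL1, hl2, hL2⟩ := pos_chain hT hT1 hx
    have h4 := (Real.hasDerivAt_log hL2.ne').comp x (hasDerivAt_L2 hx0 hL1)
    refine HasDerivAt.congr_deriv h4 ?_
    rw [hψ]
    simp only [mul_inv]
    ring
  have htend : Tendsto H atTop atTop := Real.tendsto_log_atTop.comp tendsto_L2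
  apply ENNReal.eq_top_of_forall_nnreal_le
  intro r
  obtain ⟨R, hHR, hTR⟩ :=
    ((htend.eventually_ge_atTop ((r : ℝ) + H T)).and (eventually_ge_atTop T)).exists
  have hpos : ∀ x, T ≤ x → 0 < ψ x := by
    intro x hx
    obtain ⟨hx0, hlx, hL1, hl2, hL2⟩ := pos_chain hT hT1 hx
    rw [hψ]
    positivity
  have hcont : ContinuousOn ψ (Set.uIcc T R) := by
    rw [Set.uIcc_of_le hTR]
    intro x hx
    obtain ⟨hx0, hlx, hL1, hl2, hL2⟩ := pos_chain hT hT1 hx.1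
    have c2 : ContinuousAt (fun t : ℝ => 1 + Real.log t) x :=
      continuousAt_const.add (Real.continuousAt_log hx0.ne')
    have c3' : ContinuousAt (Real.log ∘ fun t : ℝ => 1 + Real.log t) x :=
      ContinuousAt.comp (Real.continuousAt_log hL1.ne') c2
    have c3 : ContinuousAt (fun t : ℝ => 1 + Real.log (1 + Real.log t)) x :=
      continuousAt_const.add c3'
    exact ((continuousAt_id.mul (c2.mul c3)).inv₀ (mul_pos hx0 (mul_pos hL1 hL2)).ne').continuousWithinAt
  have hInt : IntervalIntegrable ψ volume T R := hcont.intervalIntegrable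
  have hFTC := intervalIntegral.integral_eq_sub_of_hasDerivAt
    (f := H) (f' := ψ) (fun x hx => derivH x (by
      rw [Set.uIcc_of_le hTR] at hx; exact hx.1)) hInt
  calc (r : ℝ≥0∞) = ENNReal.ofReal (r : ℝ) := ENNReal.ofReal_coe_nnreal.symm
    _ ≤ ENNReal.ofReal (∫ y in T..R, ψ y) := by
        apply ENNReal.ofReal_le_ofReal
        rw [hFTC]; linarith
    _ = ∫⁻ y in Set.Ioc T R, ENNReal.ofReal (ψ y) := by
        rw [intervalIntegral.integral_of_le hTR]
        apply MeasureTheory.ofReal_integral_eq_lintegral_ofReal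
        · exact (intervalIntegrable_iff_integrableOn_Ioc_of_le hTR).mp hInt
        · exact (ae_restrict_iff' measurableSet_Ioc).mpr
            (ae_of_all _ fun x hx => (hpos x hx.1.le).le)
    _ ≤ ∫⁻ y in Set.Ioi T, ENNReal.ofReal (ψ y) := lintegral_mono_set Set.Ioc_subset_Ioi_self

lemma lint_conv {ρ T : ℝ} (hρ : 1 < ρ) (hT1 : 1 ≤ T) (hT : 1 ≤ Real.log T) :
    ∫⁻ t in Set.Ioi T,
      ENNReal.ofReal ((t * (1 + Real.log t))⁻¹ * (1 + Real.log (1 + Real.log t)) ^ (-ρ)) < ∞ := by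
  set g' : ℝ → ℝ := fun t => (t * (1 + Real.log t))⁻¹ * (1 + Real.log (1 + Real.log t)) ^ (-ρ)
    with hg'
  set G : ℝ → ℝ := fun t => (1 - ρ)⁻¹ * (1 + Real.log (1 + Real.log t)) ^ (1 - ρ) with hG
  have hρ0 : (1 - ρ) ≠ 0 := by linarith
  have hderiv : ∀ x ∈ Set.Ici T, HasDerivAt G (g' x) x := by
    intro x hx
    obtain ⟨hx0, hlx, hL1, hl2, hL2⟩ := pos_chain hT hT1 hx
    have h4 := ((hasDerivAt_L2 hx0 hL1).rpow_const (p := 1 - ρ) (Or.inl hL2.ne')).const_mul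
      ((1 - ρ)⁻¹)
    have he : (1 - ρ - 1 : ℝ) = -ρ := by ring
    have heq : (1 - ρ)⁻¹ * ((1 + Real.log x)⁻¹ * x⁻¹ * (1 - ρ) *
        (1 + Real.log (1 + Real.log x)) ^ (1 - ρ - 1)) = g' x := by
      rw [he, hg']
      show _ = (x * (1 + Real.log x))⁻¹ * (1 + Real.log (1 + Real.log x)) ^ (-ρ)
      rw [mul_inv]
      field_simp
    exact heq ▸ h4
  have g'pos : ∀ x ∈ Set.Ioi T, 0 ≤ g' x := by
    intro x hx
    obtain ⟨hx0, hlx, hL1, hl2, hL2⟩ := pos_chain hT hT1 (le_of_lt hx)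
    rw [hg']
    positivity
  have htend : Tendsto G atTop (𝓝 0) := by
    have t0 : Tendsto (fun u : ℝ => u ^ (1 - ρ)) atTop (𝓝 0) := by
      have := tendsto_rpow_neg_atTop (y := ρ - 1) (by linarith)
      convert this using 2 with x
      ring_nf
    have := (t0.comp tendsto_L2).const_mul ((1 - ρ)⁻¹)
    simpa using this
  exact (integrableOn_Ioi_deriv_of_nonneg' hderiv g'pos htend).setLIntegral_lt_top

end calcpart
/-- the model function -/
def phi (P α γ : ℝ) (x : ℝ) : ℝ :=
  x ^ (-P⁻¹) * (1 + Real.log x) ^ (-α) * (1 + Real.log (1 + Real.log x)) ^ (-γ)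

/-- the threshold -/
def Tc (P α : ℝ) : ℝ := Real.exp (2 * P * (|α| + 1))

lemma Tc_one_le {P α : ℝ} (hP : 1 < P) : 1 ≤ Tc P α :=
  Real.one_le_exp (by nlinarith [abs_nonneg α])

lemma Tc_log {P α : ℝ} : Real.log (Tc P α) = 2 * P * (|α| + 1) := Real.log_exp _

lemma Tc_log_one_le {P α : ℝ} (hP : 1 < P) : 1 ≤ Real.log (Tc P α) := by
  rw [Tc_log]; nlinarith [abs_nonneg α]

lemma phi_pos {P α γ x : ℝ} (hP : 1 < P) {T : ℝ} (hT1 : 1 ≤ T) (hlT : 1 ≤ Real.log T)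
    (hx : T ≤ x) : 0 < phi P α γ x := by
  obtain ⟨hx0, hlx, hL1, hl2, hL2⟩ := pos_chain hlT hT1 hx
  unfold phi
  positivity

lemma phi_anti {P α γ : ℝ} (hP : 1 < P) (hγ : 0 < γ) {x y : ℝ}
    (hx : Tc P α ≤ x) (hxy : x ≤ y) : phi P α γ y ≤ phi P α γ x := by
  set T := Tc P α with hT
  have hP0 : (0:ℝ) < P := by linarith
  have hT1 : 1 ≤ T := Tc_one_le hP
  have hlT : 1 ≤ Real.log T := Tc_log_one_le hP
  obtain ⟨hx0, hlx, hL1x, hl2x, hL2x⟩ := pos_chain hlT hT1 hx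
  obtain ⟨hy0, hly, hL1y, hl2y, hL2y⟩ := pos_chain hlT hT1 (hx.trans hxy)
  have hε : (0:ℝ) < P⁻¹ / 2 := by positivity
  have hsplit : ∀ z : ℝ, 0 < z → phi P α γ z =
      (z ^ (-(P⁻¹ / 2)) * (1 + Real.log z) ^ (-α)) *
        (z ^ (-(P⁻¹ / 2)) * (1 + Real.log (1 + Real.log z)) ^ (-γ)) := by
    intro z hz
    unfold phi
    rw [show -P⁻¹ = -(P⁻¹/2) + -(P⁻¹/2) by ring, Real.rpow_add hz]
    ring
  rw [hsplit x hx0, hsplit y hy0]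
  have hm : -α ≤ (P⁻¹ / 2) * (1 + Real.log T) := by
    rw [hT, Tc_log]
    have h1 : P⁻¹ * P = 1 := inv_mul_cancel₀ hP0.ne'
    have h2 : (0:ℝ) < P⁻¹ := by positivity
    nlinarith [abs_nonneg α, neg_abs_le α]
  have h1 := aux_anti hε hT1 hlT hm hx hxy
  have h2 : y ^ (-(P⁻¹/2)) ≤ x ^ (-(P⁻¹/2)) :=
    Real.rpow_le_rpow_of_nonpos hx0 hxy (by linarith)
  have hlxy : Real.log x ≤ Real.log y := Real.log_le_log hx0 hxy
  have hL2mono : 1 + Real.log (1 + Real.log x) ≤ 1 + Real.log (1 + Real.log y) := by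
    have := Real.log_le_log hL1x (by linarith : 1 + Real.log x ≤ 1 + Real.log y)
    linarith
  have h3 : (1 + Real.log (1 + Real.log y)) ^ (-γ) ≤ (1 + Real.log (1 + Real.log x)) ^ (-γ) :=
    Real.rpow_le_rpow_of_nonpos hL2x hL2mono (by linarith)
  apply mul_le_mul h1 (mul_le_mul h2 h3 (Real.rpow_nonneg hL2y.le _) (Real.rpow_nonneg hx0.le _))
    (mul_nonneg (Real.rpow_nonneg hy0.le _) (Real.rpow_nonneg hL2y.le _))
    (mul_nonneg (Real.rpow_nonneg hx0.le _) (Real.rpow_nonneg hL1x.le _))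

/-- doubling the base costs at most `2^|m|` for negative-exponent comparisons -/
lemma double_base {u v m : ℝ} (hu : 1 ≤ u) (huv : u ≤ v) (hv2 : v ≤ 2 * u) :
    2 ^ (-|m|) * u ^ (-m) ≤ v ^ (-m) := by
  have hu0 : (0:ℝ) < u := by linarith
  rcases le_or_gt m 0 with hm | hm
  · have h1 : u ^ (-m) ≤ v ^ (-m) := Real.rpow_le_rpow hu0.le huv (by linarith)
    have h2 : (2:ℝ) ^ (-|m|) ≤ 1 :=
      Real.rpow_le_one_of_one_le_of_nonpos one_le_two (neg_nonpos.mpr (abs_nonneg m))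
    nlinarith [Real.rpow_nonneg hu0.le (-m)]
  · have habs : |m| = m := abs_of_pos hm
    have h1 : (2 * u) ^ (-m) ≤ v ^ (-m) :=
      Real.rpow_le_rpow_of_nonpos (by linarith) hv2 (by linarith)
    rw [Real.mul_rpow (by norm_num) hu0.le] at h1
    rw [habs]
    exact h1

/-- bound `u^m ≤ U^|m|` for `1 ≤ u ≤ U` -/
lemma base_pow_abs {u U m : ℝ} (hu : 1 ≤ u) (huU : u ≤ U) : u ^ m ≤ U ^ |m| := by
  rcases le_or_gt 0 m with hm | hm
  · calc u ^ m ≤ U ^ m := Real.rpow_le_rpow (by linarith) huU hm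
      _ ≤ U ^ |m| := Real.rpow_le_rpow_of_exponent_le (by linarith) (le_abs_self m)
  · calc u ^ m ≤ 1 := Real.rpow_le_one_of_one_le_of_nonpos hu hm.le
      _ ≤ U ^ |m| := Real.one_le_rpow (by linarith) (abs_nonneg m)
lemma weight_phi_eq {P α γ r t : ℝ} (A2 : ℝ) (hα : α = A2 + r) (ht0 : 0 < t)
    (hL1 : 0 < 1 + Real.log t) :
    t ^ (P⁻¹ - r) * (1 + Real.log t) ^ A2 * phi P α γ t
      = t ^ (-r) * (1 + Real.log t) ^ (-r) * (1 + Real.log (1 + Real.log t)) ^ (-γ) := by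
  unfold phi
  have h1 : t ^ (P⁻¹ - r) * t ^ (-P⁻¹) = t ^ (-r) := by
    rw [← Real.rpow_add ht0]; congr 1; ring
  have h2 : (1 + Real.log t) ^ A2 * (1 + Real.log t) ^ (-α) = (1 + Real.log t) ^ (-r) := by
    rw [← Real.rpow_add hL1, hα]; congr 1; ring
  calc t ^ (P⁻¹ - r) * (1 + Real.log t) ^ A2 *
        (t ^ (-P⁻¹) * (1 + Real.log t) ^ (-α) * (1 + Real.log (1 + Real.log t)) ^ (-γ))
      = (t ^ (P⁻¹ - r) * t ^ (-P⁻¹)) * ((1 + Real.log t) ^ A2 * (1 + Real.log t) ^ (-α)) *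
          (1 + Real.log (1 + Real.log t)) ^ (-γ) := by ring
    _ = _ := by rw [h1, h2]

lemma pow_form {t L1v L2v Q γ : ℝ} (ht0 : 0 < t) (hL1 : 0 < L1v) (hL2 : 0 < L2v) (hQ : 0 < Q) :
    (t ^ (-Q⁻¹) * L1v ^ (-Q⁻¹) * L2v ^ (-γ)) ^ Q = (t * L1v)⁻¹ * L2v ^ (-(γ * Q)) := by
  have hm1 : -Q⁻¹ * Q = -1 := by field_simp
  rw [Real.mul_rpow (by positivity) (by positivity),
    Real.mul_rpow (by positivity) (by positivity),
    ← Real.rpow_mul ht0.le, ← Real.rpow_mul hL1.le, ← Real.rpow_mul hL2.le, hm1,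
    Real.rpow_neg_one, Real.rpow_neg_one, show -γ * Q = -(γ * Q) by ring, mul_inv]

lemma phi2t_lower {P α γ S B2 T t : ℝ} (hP : 1 < P) (hγ : 0 < γ) (hγS : γ * S = 1) (hS1 : 1 ≤ S)
    (hSB : -1 ≤ S * (B2 - α)) (hT1 : 1 ≤ T) (hlT : 1 ≤ Real.log T) (ht : T ≤ t) :
    (2 ^ (-P⁻¹) * (2 ^ (-|α|) * 2 ^ (-γ))) ^ S *
        (t * ((1 + Real.log t) * (1 + Real.log (1 + Real.log t))))⁻¹
      ≤ (t ^ (P⁻¹ - γ) * (1 + Real.log t) ^ B2 * phi P α γ (2 * t)) ^ S := by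
  obtain ⟨ht0, hlt1, hL1, hl2, hL2⟩ := pos_chain hlT hT1 ht
  set u : ℝ := 1 + Real.log t with hu
  set u' : ℝ := 1 + Real.log u with hu'
  have hu1 : 1 ≤ u := by rw [hu]; linarith
  have hu0 : 0 < u := by linarith
  have hu'1 : 1 ≤ u' := by rw [hu']; linarith
  have hu'0 : 0 < u' := by linarith
  have hlog2 : Real.log 2 ≤ 1 := by
    have := Real.log_le_sub_one_of_pos (by norm_num : (0:ℝ) < 2); linarith
  have hlog2nn : 0 ≤ Real.log 2 := Real.log_nonneg one_le_two
  have h2t0 : (0:ℝ) < 2 * t := by linarith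
  have hlog2t : Real.log (2 * t) = Real.log 2 + Real.log t :=
    Real.log_mul (by norm_num) ht0.ne'
  set v : ℝ := 1 + Real.log (2 * t) with hv
  have huv : u ≤ v := by rw [hu, hv, hlog2t]; linarith
  have hv2 : v ≤ 2 * u := by rw [hu, hv, hlog2t]; linarith
  have hv0 : 0 < v := by linarith
  set v' : ℝ := 1 + Real.log v with hv'
  have huv' : u' ≤ v' := by
    rw [hu', hv']; linarith [Real.log_le_log hu0 huv]
  have hlogu : 0 ≤ Real.log u := Real.log_nonneg hu1
  have hv2' : v' ≤ 2 * u' := by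
    have h1 : Real.log v ≤ Real.log (2 * u) := Real.log_le_log hv0 hv2
    rw [Real.log_mul (by norm_num) hu0.ne'] at h1
    rw [hu', hv']; linarith
  -- lower bound for phi at 2t
  have hphi : 2 ^ (-P⁻¹) * t ^ (-P⁻¹) * (2 ^ (-|α|) * u ^ (-α)) * (2 ^ (-γ) * u' ^ (-γ))
      ≤ phi P α γ (2 * t) := by
    have e1 : (2:ℝ) ^ (-P⁻¹) * t ^ (-P⁻¹) = (2 * t) ^ (-P⁻¹) :=
      (Real.mul_rpow (by norm_num) ht0.le).symm
    have e2 : 2 ^ (-|α|) * u ^ (-α) ≤ v ^ (-α) := double_base hu1 huv hv2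
    have e3 : 2 ^ (-γ) * u' ^ (-γ) ≤ v' ^ (-γ) := by
      have := double_base (m := γ) hu'1 huv' hv2'
      rwa [abs_of_pos hγ] at this
    have hphi_eq : phi P α γ (2 * t) = (2 * t) ^ (-P⁻¹) * v ^ (-α) * v' ^ (-γ) := by
      rw [phi, hv', hv]
    rw [hphi_eq, ← e1]
    have nn1 : (0:ℝ) ≤ 2 ^ (-P⁻¹) * t ^ (-P⁻¹) := by positivity
    have nn2 : (0:ℝ) ≤ 2 ^ (-|α|) * u ^ (-α) := by positivity
    have nn3 : (0:ℝ) ≤ 2 ^ (-γ) * u' ^ (-γ) := by positivity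
    have nn2' : (0:ℝ) ≤ v ^ (-α) := Real.rpow_nonneg hv0.le _
    have nn3' : (0:ℝ) ≤ v' ^ (-γ) := Real.rpow_nonneg (by linarith) _
    exact mul_le_mul (mul_le_mul le_rfl e2 nn2 nn1) e3 nn3 (mul_nonneg nn1 nn2')
  set c1 : ℝ := 2 ^ (-P⁻¹) * (2 ^ (-|α|) * 2 ^ (-γ)) with hc1
  have hc1pos : 0 < c1 := by rw [hc1]; positivity
  -- multiply by the weight
  have hX : c1 * (t ^ (-γ) * u ^ (B2 - α) * u' ^ (-γ))
      ≤ t ^ (P⁻¹ - γ) * u ^ B2 * phi P α γ (2 * t) := by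
    have hw : (0:ℝ) ≤ t ^ (P⁻¹ - γ) * u ^ B2 := by positivity
    have := mul_le_mul_of_nonneg_left hphi hw
    refine le_trans (le_of_eq ?_) this
    have a1 : t ^ (P⁻¹ - γ) * t ^ (-P⁻¹) = t ^ (-γ) := by
      rw [← Real.rpow_add ht0]; congr 1; ring
    have a2 : u ^ B2 * u ^ (-α) = u ^ (B2 - α) := by
      rw [← Real.rpow_add hu0, sub_eq_add_neg]
    calc c1 * (t ^ (-γ) * u ^ (B2 - α) * u' ^ (-γ))
        = c1 * ((t ^ (P⁻¹ - γ) * t ^ (-P⁻¹)) * (u ^ B2 * u ^ (-α)) * u' ^ (-γ)) := by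
          rw [a1, a2]
      _ = t ^ (P⁻¹ - γ) * u ^ B2 *
            (2 ^ (-P⁻¹) * t ^ (-P⁻¹) * (2 ^ (-|α|) * u ^ (-α)) * (2 ^ (-γ) * u' ^ (-γ))) := by
          rw [hc1]; ring
  -- raise to the power S
  have hYnn : (0:ℝ) ≤ c1 * (t ^ (-γ) * u ^ (B2 - α) * u' ^ (-γ)) := by positivity
  have hpowS := Real.rpow_le_rpow hYnn hX (by linarith : (0:ℝ) ≤ S)
  refine le_trans ?_ hpowS
  -- expand the left power
  have e0 : (t ^ (-γ) * u ^ (B2 - α) * u' ^ (-γ)) ^ S = t⁻¹ * (u ^ (S * (B2 - α)) * u'⁻¹) := by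
    rw [Real.mul_rpow (by positivity) (by positivity),
      Real.mul_rpow (by positivity) (by positivity),
      ← Real.rpow_mul ht0.le, ← Real.rpow_mul hu0.le, ← Real.rpow_mul hu'0.le,
      show -γ * S = -1 by rw [← hγS]; ring, show (B2 - α) * S = S * (B2 - α) by ring,
      Real.rpow_neg_one, Real.rpow_neg_one]
    ring
  rw [Real.mul_rpow hc1pos.le (by positivity), e0]
  have hufin : u⁻¹ ≤ u ^ (S * (B2 - α)) := by
    have := Real.rpow_le_rpow_of_exponent_le hu1 hSB
    rwa [Real.rpow_neg_one] at this
  have hfinal : (t * (u * u'))⁻¹ ≤ t⁻¹ * (u ^ (S * (B2 - α)) * u'⁻¹) := by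
    rw [mul_inv, mul_inv]
    have h1 : u⁻¹ * u'⁻¹ ≤ u ^ (S * (B2 - α)) * u'⁻¹ :=
      mul_le_mul_of_nonneg_right hufin (by positivity)
    exact mul_le_mul_of_nonneg_left h1 (by positivity)
  exact mul_le_mul_of_nonneg_left hfinal (by positivity)
lemma ellA_of_one_lt {A : ℝ × ℝ} {t : ℝ} (ht : 1 < t) :
    ellA A t = (1 + Real.log t) ^ A.2 := by
  unfold ellA ell
  rw [if_neg (not_le.mpr ht), abs_of_nonneg (Real.log_nonneg ht.le)]

lemma ellA_of_le_one {A : ℝ × ℝ} {t : ℝ} (ht0 : 0 < t) (ht : t ≤ 1) :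
    ellA A t = (1 - Real.log t) ^ A.1 := by
  unfold ellA ell
  rw [if_pos ht, abs_of_nonpos (Real.log_nonpos ht0.le ht), sub_eq_add_neg]

lemma keyB (p s : ℝ≥0∞) (B : ℝ × ℝ) (hp1 : 1 < p) (hpt : p ≠ ∞) (hs1 : 1 ≤ s) (hst : s ≠ ∞)
    (α : ℝ) (hSB : -1 ≤ s.toReal * (B.2 - α)) {a : ℝ} (ha : 0 < a) :
    lzNorm p s B ((Set.Ioi a).indicator fun t =>
      rearr μI (fun x =>
        ENNReal.ofReal (phi p.toReal α s.toReal⁻¹ (max x (Tc p.toReal α)))) t) = ∞ := by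
  set P := p.toReal with hPdef
  set S := s.toReal with hSdef
  have hP1 : 1 < P := by
    have := ENNReal.toReal_strict_mono hpt hp1; simpa using this
  have hS1 : 1 ≤ S := by
    have := ENNReal.toReal_mono hst hs1; simpa using this
  have hS0 : 0 < S := by linarith
  set γ : ℝ := S⁻¹ with hγdef
  have hγ : 0 < γ := by positivity
  have hγS : γ * S = 1 := inv_mul_cancel₀ hS0.ne'
  set T := Tc P α with hTdef
  have hT1 : 1 ≤ T := Tc_one_le hP1
  have hlT : 1 ≤ Real.log T := Tc_log_one_le hP1
  set F : ℝ → ℝ≥0∞ := fun x => ENNReal.ofReal (phi P α γ (max x T)) with hFdef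
  have hFanti : Antitone F := by
    intro x y hxy
    exact ENNReal.ofReal_le_ofReal
      (phi_anti hP1 hγ (le_max_right x T) (max_le_max hxy le_rfl))
  set G : ℝ → ℝ≥0∞ := (Set.Ioi a).indicator fun t => rearr μI F t with hGdef
  show lzNorm p s B G = ∞
  unfold lzNorm lqNorm
  rw [if_neg hst]
  set T₂ : ℝ := T + a + 3 with hT₂def
  have hT₂1 : 1 ≤ T₂ := by linarith
  have hT₂0 : (0:ℝ) < T₂ := by linarith
  have hlT₂ : 1 ≤ Real.log T₂ := hlT.trans (Real.log_le_log (by linarith) (by linarith))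
  set c2 : ℝ := (2 ^ (-P⁻¹) * (2 ^ (-|α|) * 2 ^ (-γ))) ^ S with hc2def
  have hc2pos : 0 < c2 := by rw [hc2def]; positivity
  have hlow : ∀ t ∈ Set.Ioi T₂,
      ENNReal.ofReal (c2 * (t * ((1 + Real.log t) * (1 + Real.log (1 + Real.log t))))⁻¹)
        ≤ (ENNReal.ofReal (t ^ (p.toReal⁻¹ - s.toReal⁻¹) * ellA B t) * rearr μI G t) ^ S := by
    intro t htmem
    have ht2 : T₂ < t := htmem
    have htT : T ≤ t := by linarith
    obtain ⟨ht0, hlt1, hL1, hl2, hL2⟩ := pos_chain hlT hT1 htT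
    have ht1 : 1 < t := by linarith
    -- lower bound for rearr G
    have r0 : ENNReal.ofReal (phi P α γ (2 * t)) ≤ rearr μI G t := by
      have s1 : rearr μI F (a + t + 1) ≤ rearr μI G t :=
        le_rearr_indicator (rearr_anti F) ha (by linarith)
      have s2 : F (a + t + 2) ≤ rearr μI F (a + t + 1) :=
        le_rearr hFanti (by linarith) (by linarith)
      have s3 : ENNReal.ofReal (phi P α γ (2 * t)) ≤ F (a + t + 2) := by
        rw [hFdef]
        simp only [max_eq_left (show T ≤ a + t + 2 by linarith)]
        exact ENNReal.ofReal_le_ofReal (phi_anti hP1 hγ (by linarith) (by linarith))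
      exact s3.trans (s2.trans s1)
    have hw : ellA B t = (1 + Real.log t) ^ B.2 := ellA_of_one_lt ht1
    have hwnn : 0 ≤ t ^ (P⁻¹ - γ) * (1 + Real.log t) ^ B.2 := by positivity
    have step1 : ENNReal.ofReal (t ^ (P⁻¹ - γ) * (1 + Real.log t) ^ B.2 * phi P α γ (2 * t))
        ≤ ENNReal.ofReal (t ^ (p.toReal⁻¹ - s.toReal⁻¹) * ellA B t) * rearr μI G t := by
      rw [hw, ENNReal.ofReal_mul hwnn]
      exact mul_le_mul_right r0 _
    have step2 := ENNReal.rpow_le_rpow step1 hS0.le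
    refine le_trans ?_ step2
    rw [ENNReal.ofReal_rpow_of_nonneg
      (mul_nonneg (by positivity) (phi_pos hP1 hT1 hlT (by linarith : T ≤ 2 * t)).le) hS0.le]
    apply ENNReal.ofReal_le_ofReal
    have := phi2t_lower (B2 := B.2) hP1 hγ hγS hS1 hSB hT1 hlT htT
    calc c2 * (t * ((1 + Real.log t) * (1 + Real.log (1 + Real.log t))))⁻¹
        = (2 ^ (-P⁻¹) * (2 ^ (-|α|) * 2 ^ (-γ))) ^ S *
            (t * ((1 + Real.log t) * (1 + Real.log (1 + Real.log t))))⁻¹ := by rw [hc2def]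
      _ ≤ _ := this
  have hdiv : ∫⁻ t in Set.Ioi T₂,
      ENNReal.ofReal (c2 * (t * ((1 + Real.log t) * (1 + Real.log (1 + Real.log t))))⁻¹) = ∞ := by
    have heq : ∀ t : ℝ,
        ENNReal.ofReal (c2 * (t * ((1 + Real.log t) * (1 + Real.log (1 + Real.log t))))⁻¹)
          = ENNReal.ofReal c2 *
            ENNReal.ofReal ((t * ((1 + Real.log t) * (1 + Real.log (1 + Real.log t))))⁻¹) :=
      fun t => ENNReal.ofReal_mul hc2pos.le
    simp only [heq]
    rw [lintegral_const_mul' _ _ ENNReal.ofReal_ne_top, lint_div hT₂1 hlT₂]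
    exact ENNReal.mul_top (by simp [hc2pos])
  have hmain : ∫⁻ t in Set.Ioi (0:ℝ),
      (ENNReal.ofReal (t ^ (p.toReal⁻¹ - s.toReal⁻¹) * ellA B t) * rearr μI G t) ^ s.toReal
        = ∞ := by
    refine eq_top_iff.mpr ?_
    calc (∞ : ℝ≥0∞) = ∫⁻ t in Set.Ioi T₂,
        ENNReal.ofReal (c2 * (t * ((1 + Real.log t) * (1 + Real.log (1 + Real.log t))))⁻¹) :=
          hdiv.symm
      _ ≤ ∫⁻ t in Set.Ioi T₂,
          (ENNReal.ofReal (t ^ (p.toReal⁻¹ - s.toReal⁻¹) * ellA B t) * rearr μI G t) ^ S :=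
          setLIntegral_mono' measurableSet_Ioi hlow
      _ ≤ _ := lintegral_mono_set (Set.Ioi_subset_Ioi hT₂0.le)
  rw [hmain]
  exact ENNReal.top_rpow_of_pos (by positivity)
lemma ell_pos (t : ℝ) : 0 < ell t := by
  unfold ell; have := abs_nonneg (Real.log t); linarith

lemma ellA_pos (A : ℝ × ℝ) (t : ℝ) : 0 < ellA A t := by
  unfold ellA; split <;> exact Real.rpow_pos_of_pos (ell_pos t) _

lemma keyA (p q : ℝ≥0∞) (A : ℝ × ℝ) (hp1 : 1 < p) (hpt : p ≠ ∞) (hq1 : 1 ≤ q) {γ : ℝ}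
    (hγ : 0 < γ) (hQS : q ≠ ∞ → 1 < q.toReal * γ) :
    lzNorm p q A (fun x => ENNReal.ofReal
      (phi p.toReal (A.2 + q.toReal⁻¹) γ (max x (Tc p.toReal (A.2 + q.toReal⁻¹))))) ≠ ∞ := by
  set P := p.toReal with hPdef
  have hP1 : 1 < P := by have := ENNReal.toReal_strict_mono hpt hp1; simpa using this
  have hP0 : (0:ℝ) < P := by linarith
  set r := q.toReal⁻¹ with hrdef
  have hr0 : 0 ≤ r := by positivity
  set α := A.2 + r with hαdef
  set T := Tc P α with hTdef
  have hT1 : 1 ≤ T := Tc_one_le hP1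
  have hlT : 1 ≤ Real.log T := Tc_log_one_le hP1
  have hT0 : (0:ℝ) < T := by linarith
  have hT1' : 1 < T := by
    rcases lt_or_ge 1 T with h | h
    · exact h
    · exfalso; have := Real.log_nonpos (by linarith) h; linarith
  set F : ℝ → ℝ≥0∞ := fun x => ENNReal.ofReal (phi P α γ (max x T)) with hFdef
  have hFanti : Antitone F := fun x y hxy =>
    ENNReal.ofReal_le_ofReal (phi_anti hP1 hγ (le_max_right x T) (max_le_max hxy le_rfl))
  have hphiTpos : 0 < phi P α γ T := phi_pos hP1 hT1 hlT le_rfl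
  have hrb : ∀ t : ℝ, 0 < t →
      ENNReal.ofReal (t ^ (P⁻¹ - r) * ellA A t) * rearr μI F t
        ≤ ENNReal.ofReal (t ^ (P⁻¹ - r) * ellA A t * phi P α γ (max t T)) := by
    intro t ht
    have h1 : rearr μI F t ≤ ENNReal.ofReal (phi P α γ (max t T)) := rearr_le_self hFanti ht
    have hellnn : 0 ≤ t ^ (P⁻¹ - r) * ellA A t :=
      mul_nonneg (Real.rpow_nonneg ht.le _) (ellA_pos A t).le
    rw [ENNReal.ofReal_mul hellnn]
    exact mul_le_mul_right h1 _
  -- the big-t cancellation (valid for t > T)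
  have hbig : ∀ t : ℝ, T < t →
      t ^ (P⁻¹ - r) * ellA A t * phi P α γ (max t T)
        = t ^ (-r) * (1 + Real.log t) ^ (-r) * (1 + Real.log (1 + Real.log t)) ^ (-γ) := by
    intro t htT
    obtain ⟨ht0, hlt1, hL1, hl2, hL2⟩ := pos_chain hlT hT1 htT.le
    rw [max_eq_left htT.le, ellA_of_one_lt (by linarith : 1 < t)]
    exact weight_phi_eq A.2 hαdef ht0 hL1
  -- the small-t bounds
  obtain ⟨C1, hC1pos, hC1⟩ := bound01 (m := A.1) (ε := P⁻¹ / 2) (by positivity)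
  unfold lzNorm lqNorm
  rcases eq_or_ne q ∞ with hq | hq
  · -- q = ∞ : essSup bound
    rw [if_pos hq]
    have hr_eq : r = 0 := by rw [hrdef, hq]; simp
    set C : ℝ := max 1 (max (C1 * phi P α γ T)
      (T ^ P⁻¹ * (1 + Real.log T) ^ |A.2| * phi P α γ T)) with hCdef
    have hbound : ∀ t : ℝ, t ∈ Set.Ioi (0:ℝ) →
        ENNReal.ofReal (t ^ (P⁻¹ - r) * ellA A t) * rearr μI F t ≤ ENNReal.ofReal C := by
      intro t ht
      have ht0 : (0:ℝ) < t := ht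
      refine le_trans (hrb t ht0) (ENNReal.ofReal_le_ofReal ?_)
      rcases le_or_gt t 1 with h1 | h1
      · -- t ∈ (0,1]
        rw [max_eq_right (by linarith : t ≤ T), ellA_of_le_one ht0 h1, hr_eq, sub_zero]
        have hsplit : t ^ P⁻¹ = t ^ (P⁻¹/2) * t ^ (P⁻¹/2) := by
          rw [← Real.rpow_add ht0]; congr 1; ring
        have hb : t ^ P⁻¹ * (1 - Real.log t) ^ A.1 ≤ C1 := by
          rw [hsplit]
          have hle : t ^ (P⁻¹/2) ≤ 1 := Real.rpow_le_one ht0.le h1 (by positivity)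
          have h2 := hC1 t ⟨ht0, h1⟩
          have hnn : (0:ℝ) ≤ t ^ (P⁻¹/2) * (1 - Real.log t) ^ A.1 := by
            have : (0:ℝ) ≤ 1 - Real.log t := by
              have := Real.log_nonpos ht0.le h1; linarith
            positivity
          calc t ^ (P⁻¹/2) * t ^ (P⁻¹/2) * (1 - Real.log t) ^ A.1
              = t ^ (P⁻¹/2) * (t ^ (P⁻¹/2) * (1 - Real.log t) ^ A.1) := by ring
            _ ≤ 1 * C1 := mul_le_mul hle h2 hnn one_pos.le
            _ = C1 := one_mul _
        calc t ^ P⁻¹ * (1 - Real.log t) ^ A.1 * phi P α γ T ≤ C1 * phi P α γ T :=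
              mul_le_mul_of_nonneg_right hb hphiTpos.le
          _ ≤ C := le_trans (le_max_left _ _) (le_max_right _ _)
      · rcases le_or_gt t T with h2 | h2
        · -- t ∈ (1, T]
          rw [max_eq_right h2, ellA_of_one_lt h1, hr_eq, sub_zero]
          have hlt0 : 0 ≤ Real.log t := Real.log_nonneg h1.le
          have hb1 : t ^ P⁻¹ ≤ T ^ P⁻¹ := Real.rpow_le_rpow ht0.le h2 (by positivity)
          have hb2 : (1 + Real.log t) ^ A.2 ≤ (1 + Real.log T) ^ |A.2| :=
            base_pow_abs (by linarith) (by linarith [Real.log_le_log ht0 h2])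
          have hw : t ^ P⁻¹ * (1 + Real.log t) ^ A.2
              ≤ T ^ P⁻¹ * (1 + Real.log T) ^ |A.2| :=
            mul_le_mul hb1 hb2 (Real.rpow_nonneg (by linarith) _) (by positivity)
          calc t ^ P⁻¹ * (1 + Real.log t) ^ A.2 * phi P α γ T
              ≤ T ^ P⁻¹ * (1 + Real.log T) ^ |A.2| * phi P α γ T :=
                mul_le_mul_of_nonneg_right hw hphiTpos.le
            _ ≤ C := le_trans (le_max_right _ _) (le_max_right _ _)
        · -- t > T
          rw [hbig t h2]
          obtain ⟨ht0', hlt1, hL1, hl2, hL2⟩ := pos_chain hlT hT1 h2.le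
          rw [hr_eq, neg_zero, Real.rpow_zero, Real.rpow_zero]
          have : (1 + Real.log (1 + Real.log t)) ^ (-γ) ≤ 1 :=
            Real.rpow_le_one_of_one_le_of_nonpos (by linarith) (by linarith)
          calc 1 * 1 * (1 + Real.log (1 + Real.log t)) ^ (-γ) ≤ 1 := by
                rw [one_mul, one_mul]; exact this
            _ ≤ C := le_max_left _ _
    have hess : essSup (fun t => ENNReal.ofReal (t ^ (P⁻¹ - r) * ellA A t) * rearr μI F t) μI
        ≤ ENNReal.ofReal C :=
      essSup_le_of_ae_le _ ((ae_restrict_iff' measurableSet_Ioi).mpr (ae_of_all _ hbound))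
    exact (lt_of_le_of_lt hess ENNReal.ofReal_lt_top).ne
  · -- q < ∞ : integral bound
    rw [if_neg hq]
    set Q := q.toReal with hQdef
    have hQ1 : 1 ≤ Q := by
      have := ENNReal.toReal_mono hq hq1; simpa using this
    have hQ0 : (0:ℝ) < Q := by linarith
    have hρ : 1 < γ * Q := by have := hQS hq; linarith [hQS hq, mul_comm Q γ]
    set W : ℝ → ℝ≥0∞ := fun t =>
      (ENNReal.ofReal (t ^ (P⁻¹ - r) * ellA A t) * rearr μI F t) ^ Q with hWdef
    suffices hfin : ∫⁻ t in Set.Ioi (0:ℝ), W t ≠ ∞ by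
      exact (ENNReal.rpow_lt_top_of_nonneg (inv_nonneg.mpr hQ0.le) hfin).ne
    -- split the integral
    rw [← Set.Ioc_union_Ioi_eq_Ioi hT0.le,
      lintegral_union measurableSet_Ioi (Set.Ioc_disjoint_Ioi le_rfl)]
    apply ENNReal.add_ne_top.mpr
    constructor
    · -- Ioc 0 T, split again
      rw [← Set.Ioc_union_Ioc_eq_Ioc zero_le_one hT1,
        lintegral_union measurableSet_Ioc (Set.Ioc_disjoint_Ioc.mpr (inf_le_left.trans le_sup_right))]
      apply ENNReal.add_ne_top.mpr
      constructor
      · -- Ioc 0 1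
        set K : ℝ := C1 ^ Q * phi P α γ T ^ Q with hKdef
        have hbd : ∀ t ∈ Set.Ioc (0:ℝ) 1,
            W t ≤ ENNReal.ofReal (K * t ^ (Q * (P⁻¹/2) - 1)) := by
          intro t ht
          obtain ⟨ht0, ht1⟩ := ht
          have hmax : max t T = T := max_eq_right (by linarith)
          have hlognp : Real.log t ≤ 0 := Real.log_nonpos ht0.le ht1
          have hwnn : 0 ≤ t ^ (P⁻¹ - r) * ellA A t * phi P α γ (max t T) :=
            mul_nonneg (mul_nonneg (Real.rpow_nonneg ht0.le _) (ellA_pos A t).le)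
              (phi_pos hP1 hT1 hlT (le_max_right t T)).le
          have step := ENNReal.rpow_le_rpow (hrb t ht0) hQ0.le
          refine le_trans step ?_
          rw [ENNReal.ofReal_rpow_of_nonneg hwnn hQ0.le, hmax]
          apply ENNReal.ofReal_le_ofReal
          rw [ellA_of_le_one ht0 ht1]
          have e1 : (t ^ (P⁻¹ - r) * (1 - Real.log t) ^ A.1 * phi P α γ T) ^ Q
              = t ^ ((P⁻¹ - r) * Q) * (1 - Real.log t) ^ (A.1 * Q) * phi P α γ T ^ Q := by
            rw [Real.mul_rpow (mul_nonneg (Real.rpow_nonneg ht0.le _)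
                (Real.rpow_nonneg (by linarith) _)) hphiTpos.le,
              Real.mul_rpow (Real.rpow_nonneg ht0.le _) (Real.rpow_nonneg (by linarith) _),
              ← Real.rpow_mul ht0.le, ← Real.rpow_mul (by linarith)]
          rw [e1]
          have hLnn : (0:ℝ) ≤ 1 - Real.log t := by linarith
          have hrQ : r * Q = 1 := by rw [hrdef]; exact inv_mul_cancel₀ hQ0.ne'
          have e2 : t ^ ((P⁻¹ - r) * Q) = t ^ (Q * (P⁻¹/2) - 1) * t ^ (Q * (P⁻¹/2)) := by
            rw [← Real.rpow_add ht0]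
            congr 1
            linear_combination -hrQ
          have e3 : t ^ (Q * (P⁻¹/2)) * (1 - Real.log t) ^ (A.1 * Q) ≤ C1 ^ Q := by
            have h0 : (t ^ (P⁻¹/2) * (1 - Real.log t) ^ A.1) ^ Q
                = t ^ (Q * (P⁻¹/2)) * (1 - Real.log t) ^ (A.1 * Q) := by
              rw [Real.mul_rpow (Real.rpow_nonneg ht0.le _) (Real.rpow_nonneg hLnn _),
                ← Real.rpow_mul ht0.le, ← Real.rpow_mul hLnn, mul_comm (P⁻¹/2) Q]
            rw [← h0]
            exact Real.rpow_le_rpow (by positivity) (hC1 t ⟨ht0, ht1⟩) hQ0.le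
          calc t ^ ((P⁻¹ - r) * Q) * (1 - Real.log t) ^ (A.1 * Q) * phi P α γ T ^ Q
              = (t ^ (Q * (P⁻¹/2)) * (1 - Real.log t) ^ (A.1 * Q)) * phi P α γ T ^ Q
                  * t ^ (Q * (P⁻¹/2) - 1) := by rw [e2]; ring
            _ ≤ C1 ^ Q * phi P α γ T ^ Q * t ^ (Q * (P⁻¹/2) - 1) := by
                apply mul_le_mul_of_nonneg_right (mul_le_mul_of_nonneg_right e3
                  (Real.rpow_nonneg hphiTpos.le _)) (Real.rpow_nonneg ht0.le _)
            _ = K * t ^ (Q * (P⁻¹/2) - 1) := by rw [hKdef]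
        have hint : IntegrableOn (fun t : ℝ => K * t ^ (Q * (P⁻¹/2) - 1)) (Set.Ioc (0:ℝ) 1) := by
          apply Integrable.const_mul
          refine (intervalIntegrable_iff_integrableOn_Ioc_of_le zero_le_one).mp ?_
          apply intervalIntegral.intervalIntegrable_rpow'
          nlinarith [mul_pos hQ0 (by positivity : (0:ℝ) < P⁻¹/2)]
        exact (lt_of_le_of_lt (setLIntegral_mono' measurableSet_Ioc hbd)
          hint.setLIntegral_lt_top).ne
      · -- Ioc 1 T
        set K2 : ℝ := (T ^ |P⁻¹ - r| * (1 + Real.log T) ^ |A.2| * phi P α γ T) ^ Q with hK2def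
        have hbd : ∀ t ∈ Set.Ioc (1:ℝ) T, W t ≤ ENNReal.ofReal K2 := by
          intro t ht
          obtain ⟨ht1, htT⟩ := ht
          have ht0 : (0:ℝ) < t := by linarith
          have hmax : max t T = T := max_eq_right htT
          have hwnn : 0 ≤ t ^ (P⁻¹ - r) * ellA A t * phi P α γ (max t T) :=
            mul_nonneg (mul_nonneg (Real.rpow_nonneg ht0.le _) (ellA_pos A t).le)
              (phi_pos hP1 hT1 hlT (le_max_right t T)).le
          have step := ENNReal.rpow_le_rpow (hrb t ht0) hQ0.le
          refine le_trans step ?_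
          rw [ENNReal.ofReal_rpow_of_nonneg hwnn hQ0.le, hmax]
          apply ENNReal.ofReal_le_ofReal
          rw [ellA_of_one_lt ht1, hK2def]
          have hb1 : t ^ (P⁻¹ - r) ≤ T ^ |P⁻¹ - r| := base_pow_abs ht1.le htT
          have hb2 : (1 + Real.log t) ^ A.2 ≤ (1 + Real.log T) ^ |A.2| :=
            base_pow_abs (by linarith [Real.log_nonneg ht1.le]) (by linarith [Real.log_le_log ht0 htT])
          have hlt0' : 0 ≤ Real.log t := Real.log_nonneg ht1.le
          apply Real.rpow_le_rpow (mul_nonneg (mul_nonneg (Real.rpow_nonneg ht0.le _)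
            (Real.rpow_nonneg (by linarith) _)) hphiTpos.le) _ hQ0.le
          have := mul_le_mul hb1 hb2 (Real.rpow_nonneg (by linarith [Real.log_nonneg ht1.le]) _)
            (Real.rpow_nonneg hT0.le _)
          exact mul_le_mul_of_nonneg_right this hphiTpos.le
        refine (lt_of_le_of_lt (setLIntegral_mono' measurableSet_Ioc hbd) ?_).ne
        rw [setLIntegral_const, Real.volume_Ioc]
        exact ENNReal.mul_lt_top ENNReal.ofReal_lt_top ENNReal.ofReal_lt_top
    · -- Ioi T
      have hbd : ∀ t ∈ Set.Ioi T, W t ≤ ENNReal.ofReal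
          ((t * (1 + Real.log t))⁻¹ * (1 + Real.log (1 + Real.log t)) ^ (-(γ * Q))) := by
        intro t htT
        obtain ⟨ht0, hlt1, hL1, hl2, hL2⟩ := pos_chain hlT hT1 (le_of_lt htT)
        have hwnn : 0 ≤ t ^ (P⁻¹ - r) * ellA A t * phi P α γ (max t T) :=
          mul_nonneg (mul_nonneg (Real.rpow_nonneg ht0.le _) (ellA_pos A t).le)
            (phi_pos hP1 hT1 hlT (le_max_right t T)).le
        have step := ENNReal.rpow_le_rpow (hrb t ht0) hQ0.le
        refine le_trans step ?_
        rw [ENNReal.ofReal_rpow_of_nonneg hwnn hQ0.le]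
        apply ENNReal.ofReal_le_ofReal
        rw [hbig t htT, hrdef, pow_form ht0 hL1 hL2 hQ0]
      have hconv := lint_conv (ρ := γ * Q) hρ hT1 hlT
      exact (lt_of_le_of_lt (setLIntegral_mono' measurableSet_Ioi hbd) hconv).ne

lemma F_measurable {P α γ T : ℝ} (hT0 : 0 < T) (hlT : 1 ≤ Real.log T) :
    Measurable (fun x : ℝ => ENNReal.ofReal (phi P α γ (max x T))) := by
  have hg : Continuous fun x : ℝ => max x T := continuous_id.max continuous_const
  have hgpos : ∀ x : ℝ, 0 < max x T := fun x => lt_of_lt_of_le hT0 (le_max_right x T)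
  have hloggt : ∀ x : ℝ, 1 ≤ Real.log (max x T) := fun x =>
    le_trans hlT (Real.log_le_log hT0 (le_max_right x T))
  have hL1pos : ∀ x : ℝ, 0 < 1 + Real.log (max x T) := fun x => by linarith [hloggt x]
  have hL2pos : ∀ x : ℝ, 0 < 1 + Real.log (1 + Real.log (max x T)) := fun x => by
    have h1 : (0:ℝ) ≤ Real.log (1 + Real.log (max x T)) :=
      Real.log_nonneg (by linarith [hloggt x])
    linarith
  have hc1 : Continuous fun x : ℝ => (max x T) ^ (-P⁻¹) :=
    hg.rpow_const fun x => Or.inl (hgpos x).ne'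
  have hlog1 : Continuous fun x : ℝ => 1 + Real.log (max x T) :=
    continuous_const.add (hg.log fun x => (hgpos x).ne')
  have hc2 : Continuous fun x : ℝ => (1 + Real.log (max x T)) ^ (-α) :=
    hlog1.rpow_const fun x => Or.inl (hL1pos x).ne'
  have hlog2 : Continuous fun x : ℝ => 1 + Real.log (1 + Real.log (max x T)) :=
    continuous_const.add (hlog1.log fun x => (hL1pos x).ne')
  have hc3 : Continuous fun x : ℝ => (1 + Real.log (1 + Real.log (max x T))) ^ (-γ) :=
    hlog2.rpow_const fun x => Or.inl (hL2pos x).ne'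
  exact (ENNReal.continuous_ofReal.comp ((hc1.mul hc2).mul hc3)).measurable


/-- for `p < ∞`, `s < q` and `β_∞ < α_∞ ≤ β_∞ + 1/s - 1/q`, the supremum
of the tails is infinite for every `a > 0`; in particular it does not tend to `0`. -/
theorem lz_tail_sup_infinite (p q s : ℝ≥0∞) (A B : ℝ × ℝ)
    (hA : LZAdmissible p q A) (hB : LZAdmissible p s B) (hp : p ≠ ∞) (hqs : s < q)
    (h₁ : B.2 < A.2) (h₂ : A.2 ≤ B.2 + s.toReal⁻¹ - q.toReal⁻¹) :
    (∀ a : ℝ, 0 < a →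
        (⨆ (f : ℝ → ℝ≥0∞) (_ : Measurable f) (_ : lzNorm p q A f ≤ 1),
          lzNorm p s B ((Set.Ioi a).indicator fun t => rearr μI f t)) = ∞) ∧
      ¬ Tendsto (fun a : ℝ =>
          ⨆ (f : ℝ → ℝ≥0∞) (_ : Measurable f) (_ : lzNorm p q A f ≤ 1),
            lzNorm p s B ((Set.Ioi a).indicator fun t => rearr μI f t))
        atTop (nhds 0) := by
  -- extract parameter facts
  have hs_ne_top : s ≠ ∞ := ne_top_of_lt hqs
  obtain ⟨hp1, hq1⟩ : 1 < p ∧ 1 ≤ q := by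
    rcases hA with ⟨hpe, hqe, -⟩ | ⟨hp1, -, hq1⟩ | ⟨hpe, -⟩ | ⟨hpe, -⟩
    · exfalso
      rcases hB with ⟨-, hse, -⟩ | ⟨hp1', -⟩ | ⟨hpe', -⟩ | ⟨hpe', -⟩
      · rw [hqe, hse] at hqs; exact lt_irrefl _ hqs
      · rw [hpe] at hp1'; exact lt_irrefl _ hp1'
      · exact hp hpe'
      · exact hp hpe'
    · exact ⟨hp1, hq1⟩
    · exact absurd hpe hp
    · exact absurd hpe hp
  have hs1 : 1 ≤ s := by
    rcases hB with ⟨hpe, -⟩ | ⟨-, -, hs1⟩ | ⟨hpe, -⟩ | ⟨hpe, -⟩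
    · rw [hpe] at hp1; exact absurd hp1 (lt_irrefl _)
    · exact hs1
    · exact absurd hpe hp
    · exact absurd hpe hp
  have hq0 : q ≠ 0 := (zero_lt_one.trans_le hq1).ne'
  have hs0 : s ≠ 0 := (zero_lt_one.trans_le hs1).ne'
  have hP1 : 1 < p.toReal := by
    have := ENNReal.toReal_strict_mono hp hp1; simpa using this
  have hS1 : 1 ≤ s.toReal := by
    have := ENNReal.toReal_mono hs_ne_top hs1; simpa using this
  have hS0 : (0:ℝ) < s.toReal := by linarith
  have hγ : (0:ℝ) < s.toReal⁻¹ := by positivity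
  have hQS : q ≠ ∞ → 1 < q.toReal * s.toReal⁻¹ := by
    intro hqt
    have h1 : s.toReal < q.toReal := ENNReal.toReal_strict_mono hqt hqs
    have h2 : 1 < q.toReal / s.toReal := (one_lt_div hS0).mpr h1
    rwa [div_eq_mul_inv] at h2
  have hSB : -1 ≤ s.toReal * (B.2 - (A.2 + q.toReal⁻¹)) := by
    have h3 : -s.toReal⁻¹ ≤ B.2 - (A.2 + q.toReal⁻¹) := by linarith
    have h4 := mul_le_mul_of_nonneg_left h3 hS0.le
    have h5 : s.toReal * s.toReal⁻¹ = 1 := mul_inv_cancel₀ hS0.ne'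
    nlinarith
  -- the extremal function
  set T := Tc p.toReal (A.2 + q.toReal⁻¹) with hTdef
  have hT1 : 1 ≤ T := Tc_one_le hP1
  have hlT : 1 ≤ Real.log T := Tc_log_one_le hP1
  set F : ℝ → ℝ≥0∞ := fun x =>
    ENNReal.ofReal (phi p.toReal (A.2 + q.toReal⁻¹) s.toReal⁻¹ (max x T)) with hFdef
  have hFmeas : Measurable F := F_measurable (by linarith) hlT
  have keyAres : lzNorm p q A F ≠ ∞ := keyA p q A hp1 hp hq1 hγ hQS
  have keyBres : ∀ a : ℝ, 0 < a →
      lzNorm p s B ((Set.Ioi a).indicator fun t => rearr μI F t) = ∞ := fun a ha =>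
    keyB p s B hp1 hp hs1 hs_ne_top (A.2 + q.toReal⁻¹) hSB ha
  have main : ∀ a : ℝ, 0 < a →
      (⨆ (f : ℝ → ℝ≥0∞) (_ : Measurable f) (_ : lzNorm p q A f ≤ 1),
        lzNorm p s B ((Set.Ioi a).indicator fun t => rearr μI f t)) = ∞ := by
    intro a ha
    rcases eq_or_ne (lzNorm p q A F) 0 with h0 | hn0
    · refine eq_top_iff.mpr ?_
      refine le_iSup_of_le F (le_iSup_of_le hFmeas (le_iSup_of_le ?_ ?_))
      · rw [h0]; exact zero_le_one
      · exact le_of_eq (keyBres a ha).symm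
    · set c : ℝ≥0∞ := (lzNorm p q A F)⁻¹ with hcdef
      have hc0 : c ≠ 0 := ENNReal.inv_ne_zero.mpr keyAres
      have hct : c ≠ ∞ := ENNReal.inv_ne_top.mpr hn0
      refine eq_top_iff.mpr ?_
      refine le_iSup_of_le (fun x => c * F x)
        (le_iSup_of_le (hFmeas.const_mul c) (le_iSup_of_le ?_ ?_))
      · rw [lzNorm_const_mul p q A hq0 hc0 hct F, hcdef,
          ENNReal.inv_mul_cancel hn0 keyAres]
      · have hind : ((Set.Ioi a).indicator fun t => rearr μI (fun x => c * F x) t)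
            = fun t => c * ((Set.Ioi a).indicator (fun t => rearr μI F t) t) := by
          funext t
          by_cases hta : t ∈ Set.Ioi a
          · simp only [Set.indicator_of_mem hta]
            exact rearr_smul hc0 hct t
          · simp only [Set.indicator_of_notMem hta, mul_zero]
        rw [hind, lzNorm_const_mul p s B hs0 hc0 hct _, keyBres a ha,
          ENNReal.mul_top hc0]
  refine ⟨main, ?_⟩
  intro hten
  have h1 := hten.eventually_lt_const (by norm_num : (0:ℝ≥0∞) < 1)
  obtain ⟨a, ha1, ha0⟩ := (h1.and (eventually_gt_atTop (0:ℝ))).exists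
  rw [main a ha0] at ha1
  exact absurd ha1 (by simp)


end
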